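/- Let q ≥ 2 and t₁ ≥ 0 be integers. For 0 ≤ b ≤ q−1 define Γ_b = {(i,j) ∈ ℤ² : 0 ≤ i < q²+q, −t₁ ≤ qi + (q²+q)j + (q+1)b < 0}. Then the sum over b = 0, ..., q−1 of #Γ_b equals q·t₁. -/
import Mathlib


/-- For q ≥ 2 and t₁ ≥ 0, with Γ_b = {(i,j) : 0 ≤ i < q²+q, −t₁ ≤ qi+(q²+q)j+(q+1)b < 0},
    ∑_{b=0}^{q-1} #Γ_b = q·t₁. -/
theorem stmt_8 (q t1 : ℤ) (hq : 2 ≤ q) (ht : 0 ≤ t1) :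
    ((∑ b ∈ Finset.range q.toNat,
        ({p : ℤ × ℤ | 0 ≤ p.1 ∧ p.1 < q ^ 2 + q ∧
            -t1 ≤ q * p.1 + (q ^ 2 + q) * p.2 + (q + 1) * (b : ℤ) ∧
            q * p.1 + (q ^ 2 + q) * p.2 + (q + 1) * (b : ℤ) < 0}).ncard : ℕ) : ℤ)
      = q * t1 := by
  classical
  have hq0 : (0:ℤ) < q := by linarith
  have hq1 : (0:ℤ) < q + 1 := by linarith
  have hQ : (0:ℤ) < q ^ 2 + q := by nlinarith
  set B : Finset (ℤ × ℤ) := Finset.Ico (0:ℤ) (q^2+q) ×ˢ Finset.Ico (-t1 - q - 2) 0 with hB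
  -- every solution with (b:ℤ) < q lies in the box B
  have hbox : ∀ b : ℕ, (b:ℤ) < q → ∀ p : ℤ × ℤ,
      (0 ≤ p.1 ∧ p.1 < q ^ 2 + q ∧
        -t1 ≤ q * p.1 + (q ^ 2 + q) * p.2 + (q + 1) * (b : ℤ) ∧
        q * p.1 + (q ^ 2 + q) * p.2 + (q + 1) * (b : ℤ) < 0) → p ∈ B := by
    intro b hbq p hp
    obtain ⟨h1, h2, h3, h4⟩ := hp
    have hb0 : (0:ℤ) ≤ b := Int.natCast_nonneg b
    have hj0 : p.2 < 0 := by
      by_contra h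
      push_neg at h
      nlinarith [mul_nonneg hQ.le h, mul_nonneg hq0.le h1, mul_nonneg hq1.le hb0]
    have hjlo : -t1 - q - 2 ≤ p.2 := by
      by_contra h
      push_neg at h
      have h' : p.2 ≤ -t1 - q - 3 := by linarith
      nlinarith [mul_le_mul_of_nonneg_left h' hQ.le,
        mul_le_mul_of_nonneg_left (show p.1 ≤ q^2 + q - 1 by linarith) hq0.le,
        mul_le_mul_of_nonneg_left (show (b:ℤ) ≤ q - 1 by linarith) hq1.le,
        mul_nonneg ht (show (0:ℤ) ≤ q^2 + q - 1 by nlinarith)]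
    simp only [hB, Finset.mem_product, Finset.mem_Ico]
    exact ⟨⟨h1, h2⟩, hjlo, hj0⟩
  -- replace ncard by Finset.card
  have key : ∀ b ∈ Finset.range q.toNat,
      ({p : ℤ × ℤ | 0 ≤ p.1 ∧ p.1 < q ^ 2 + q ∧
          -t1 ≤ q * p.1 + (q ^ 2 + q) * p.2 + (q + 1) * (b : ℤ) ∧
          q * p.1 + (q ^ 2 + q) * p.2 + (q + 1) * (b : ℤ) < 0}).ncard
      = (B.filter (fun p => 0 ≤ p.1 ∧ p.1 < q ^ 2 + q ∧
          -t1 ≤ q * p.1 + (q ^ 2 + q) * p.2 + (q + 1) * (b : ℤ) ∧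
          q * p.1 + (q ^ 2 + q) * p.2 + (q + 1) * (b : ℤ) < 0)).card := by
    intro b hb
    have hbq : (b:ℤ) < q := by
      have := Finset.mem_range.mp hb
      omega
    rw [← Set.ncard_coe_finset]
    congr 1
    ext p
    simp only [Set.mem_setOf_eq, Finset.coe_filter, Set.mem_setOf_eq, Finset.mem_filter]
    constructor
    · intro hp
      exact ⟨hbox b hbq p hp, hp⟩
    · intro hp
      exact hp.2
  rw [Finset.sum_congr rfl key]
  -- sum of cards = card of sigma
  rw [← Finset.card_sigma]
  -- bijection with Ico 0 q × Ico (-t1) 0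
  have hcard : ((Finset.range q.toNat).sigma fun b => B.filter (fun p => 0 ≤ p.1 ∧ p.1 < q ^ 2 + q ∧
          -t1 ≤ q * p.1 + (q ^ 2 + q) * p.2 + (q + 1) * (b : ℤ) ∧
          q * p.1 + (q ^ 2 + q) * p.2 + (q + 1) * (b : ℤ) < 0)).card
      = ((Finset.Ico (0:ℤ) q) ×ˢ (Finset.Ico (-t1) 0)).card := by
    apply Finset.card_bij (fun a _ =>
      (a.2.1 / (q+1), q * a.2.1 + (q ^ 2 + q) * a.2.2 + (q + 1) * (a.1 : ℤ)))
    · rintro ⟨b, i, j⟩ ha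
      rw [Finset.mem_sigma, Finset.mem_filter] at ha
      obtain ⟨hbr, -, h1, h2, h3, h4⟩ := ha
      simp only [Finset.mem_product, Finset.mem_Ico]
      refine ⟨⟨Int.ediv_nonneg h1 hq1.le, ?_⟩, h3, h4⟩
      rw [Int.ediv_lt_iff_lt_mul hq1]
      nlinarith
    · rintro ⟨b, i, j⟩ ha ⟨b', i', j'⟩ ha' hfe
      rw [Finset.mem_sigma, Finset.mem_filter] at ha ha'
      obtain ⟨hbr, -, h1, h2, h3, h4⟩ := ha
      obtain ⟨hbr', -, h1', h2', h3', h4'⟩ := ha'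
      have hbq : (b:ℤ) < q := by
        have h : b < q.toNat := Finset.mem_range.mp hbr
        omega
      have hbq' : (b':ℤ) < q := by
        have h : b' < q.toNat := Finset.mem_range.mp hbr'
        omega
      have hb0 : (0:ℤ) ≤ b := Int.natCast_nonneg b
      have hb0' : (0:ℤ) ≤ b' := Int.natCast_nonneg b'
      simp only [Prod.mk.injEq] at hfe
      obtain ⟨hdiv, hval⟩ := hfe
      have hc : q * (i + (q+1)*j - i' - (q+1)*j') = (q+1) * ((b':ℤ) - b) := by
        linear_combination hval
      have hdvd : q ∣ ((b':ℤ) - b) :=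
        ⟨(i + (q+1)*j - i' - (q+1)*j') - ((b':ℤ) - b), by linarith⟩
      have habs : |(b':ℤ) - b| < q := abs_lt.mpr ⟨by linarith, by linarith⟩
      have hbb : (b':ℤ) - b = 0 := Int.eq_zero_of_abs_lt_dvd hdvd habs
      have hbeq : b = b' := by exact_mod_cast (by linarith : (b:ℤ) = b')
      subst hbeq
      have hc0 : i + (q+1)*j - i' - (q+1)*j' = 0 := by
        have : q * (i + (q+1)*j - i' - (q+1)*j') = 0 := by rw [hc, hbb]; ring
        exact (mul_eq_zero.mp this).resolve_left hq0.ne'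
      have hmod : i % (q+1) = i' % (q+1) :=
        Int.modEq_iff_dvd.mpr ⟨j - j', by linarith⟩
      have e1 := Int.mul_ediv_add_emod i (q+1)
      have e2 := Int.mul_ediv_add_emod i' (q+1)
      rw [hdiv, hmod] at e1
      have hieq : i = i' := by linarith
      have hjeq : j = j' := by
        have : (q+1) * j = (q+1) * j' := by linarith
        exact mul_left_cancel₀ hq1.ne' this
      simp [hieq, hjeq]
    · rintro ⟨k, n⟩ hkn
      simp only [Finset.mem_product, Finset.mem_Ico] at hkn
      obtain ⟨⟨hk0, hkq⟩, hn1, hn2⟩ := hkn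
      have hb0 : 0 ≤ n % q := Int.emod_nonneg n hq0.ne'
      have hb0q : n % q < q := Int.emod_lt_of_pos n hq0
      set m : ℤ := n / q - n % q with hm
      have hnm : q * m + (q+1) * (n % q) = n := by
        simp only [hm]
        linear_combination Int.mul_ediv_add_emod n q
      have hr0 : 0 ≤ m % (q+1) := Int.emod_nonneg m hq1.ne'
      have hrq : m % (q+1) < q + 1 := Int.emod_lt_of_pos m hq1
      set r : ℤ := m % (q+1) with hrdef
      set i : ℤ := (q+1) * k + r with hi
      set j : ℤ := m / (q+1) - k with hj
      have him : i + (q+1) * j = m := by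
        simp only [hi, hj]
        linear_combination Int.mul_ediv_add_emod m (q+1)
      have hi0 : 0 ≤ i := by positivity
      have hi2 : i < q ^ 2 + q := by nlinarith
      have hval : q * i + (q ^ 2 + q) * j + (q + 1) * ((n % q).toNat : ℤ) = n := by
        rw [Int.toNat_of_nonneg hb0]
        linear_combination q * him + hnm
      refine ⟨⟨(n % q).toNat, (i, j)⟩, ?_, ?_⟩
      · rw [Finset.mem_sigma, Finset.mem_filter]
        have hprop : 0 ≤ i ∧ i < q ^ 2 + q ∧
            -t1 ≤ q * i + (q ^ 2 + q) * j + (q + 1) * (((n % q).toNat : ℕ) : ℤ) ∧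
            q * i + (q ^ 2 + q) * j + (q + 1) * (((n % q).toNat : ℕ) : ℤ) < 0 := by
          refine ⟨hi0, hi2, ?_, ?_⟩ <;> rw [hval] <;> linarith
        have hbmem : (n % q).toNat ∈ Finset.range q.toNat := Finset.mem_range.mpr (by omega)
        refine ⟨hbmem, ?_, hprop⟩
        exact hbox _ (by rw [Int.toNat_of_nonneg hb0]; exact hb0q) (i, j) hprop
      · simp only [Prod.mk.injEq]
        constructor
        · have : i = r + k * (q+1) := by rw [hi]; ring
          rw [this, Int.add_mul_ediv_right r k hq1.ne',
            Int.ediv_eq_zero_of_lt hr0 hrq, zero_add]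
        · exact hval
  rw [hcard, Finset.card_product, Int.card_Ico, Int.card_Ico]
  have e1 : ((q - 0).toNat : ℤ) = q := by omega
  have e2 : (((0:ℤ) - -t1).toNat : ℤ) = t1 := by omega
  rw [Nat.cast_mul, e1, e2]
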